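/- Twin paradox proper time inequality: in 2-dimensional Minkowski space, let x : [a,b] → ℝ² be a C¹ timelike future-pointing path from A = (0,0) to D = (T, 0) with T > 0 that is not the straight segment. Then its proper time ∫_a^b √(η(x',x')) dt is strictly less than T, the proper time of the straight path from A to D. -/

import Mathlib

/-- The 2-dimensional Minkowski bilinear form with signature (+,−). -/
noncomputable def mink2 (u v : Fin 2 → ℝ) : ℝ := u 0 * v 0 - u 1 * v 1

/-- twin paradox proper time: a C¹ timelike future-pointing path
from (0,0) to (T,0) which is not the straight segment has proper time strictly
less than T. -/
theorem twin_paradox_proper_time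
    (T : ℝ) (hT : 0 < T) (a b : ℝ) (hab : a ≤ b)
    (x : ℝ → Fin 2 → ℝ) (hx : ContDiff ℝ 1 x)
    (hxa : x a = ![0, 0]) (hxb : x b = ![T, 0])
    (hfut : ∀ t, 0 < deriv x t 0)
    (htl : ∀ t, 0 < mink2 (deriv x t) (deriv x t))
    (hnotline : ∃ t ∈ Set.Icc a b, x t 1 ≠ 0) :
    (∫ t in a..b, Real.sqrt (mink2 (deriv x t) (deriv x t))) < T := by
  have hd : Differentiable ℝ x := hx.differentiable one_ne_zero
  have hcd : Continuous (deriv x) := hx.continuous_deriv le_rfl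
  -- component derivatives
  have hcomp : ∀ (i : Fin 2) (t : ℝ), HasDerivAt (fun s => x s i) (deriv x t i) t := by
    intro i t
    exact ((ContinuousLinearMap.proj (R:=ℝ) (φ:=fun _ : Fin 2 => ℝ) i).hasFDerivAt.comp_hasDerivAt t (hd t).hasDerivAt)
  have hcdi : ∀ i : Fin 2, Continuous (fun t => deriv x t i) := fun i =>
    (continuous_apply i).comp hcd
  -- a < b
  have hlt : a < b := by
    rcases lt_or_eq_of_le hab with h | h
    · exact h
    · exfalso
      subst h
      rw [hxa] at hxb
      have := congrFun hxb 0
      simp at this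
      linarith
  -- integral of the first component derivative is T
  have hint : (∫ t in a..b, deriv x t 0) = T := by
    have := intervalIntegral.integral_eq_sub_of_hasDerivAt
      (f := fun s => x s 0) (f' := fun t => deriv x t 0)
      (fun t _ => hcomp 0 t) ((hcdi 0).intervalIntegrable a b)
    rw [this]
    simp [hxa, hxb]
  rw [← hint]
  -- find a point where the spatial derivative is nonzero
  obtain ⟨t₀, ht₀mem, ht₀ne⟩ := hnotline
  have hga : x a 1 = 0 := by rw [hxa]; simp
  have hat₀ : a < t₀ := by
    rcases lt_or_eq_of_le ht₀mem.1 with h | h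
    · exact h
    · exact absurd (h ▸ hga) ht₀ne
  obtain ⟨c, hc, hceq⟩ := exists_hasDerivAt_eq_slope (fun s => x s 1)
    (fun t => deriv x t 1) hat₀
    (((continuous_apply 1).comp hx.continuous).continuousOn)
    (fun t _ => hcomp 1 t)
  have hcne : deriv x c 1 ≠ 0 := by
    rw [hceq, hga, sub_zero]
    exact div_ne_zero ht₀ne (by linarith)
  have hcIcc : c ∈ Set.Icc a b := ⟨hc.1.le, le_trans hc.2.le ht₀mem.2⟩
  -- pointwise inequality
  have hle : ∀ t, Real.sqrt (mink2 (deriv x t) (deriv x t)) ≤ deriv x t 0 := by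
    intro t
    have h1 : mink2 (deriv x t) (deriv x t) ≤ (deriv x t 0) ^ 2 := by
      unfold mink2; nlinarith [sq_nonneg (deriv x t 1)]
    calc Real.sqrt (mink2 (deriv x t) (deriv x t)) ≤ Real.sqrt ((deriv x t 0) ^ 2) :=
          Real.sqrt_le_sqrt h1
      _ = deriv x t 0 := by rw [Real.sqrt_sq (hfut t).le]
  have hstrict : Real.sqrt (mink2 (deriv x c) (deriv x c)) < deriv x c 0 := by
    have h1 : mink2 (deriv x c) (deriv x c) < (deriv x c 0) ^ 2 := by
      unfold mink2
      nlinarith [sq_nonneg (deriv x c 1), sq_pos_of_ne_zero hcne]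
    calc Real.sqrt (mink2 (deriv x c) (deriv x c)) < Real.sqrt ((deriv x c 0) ^ 2) :=
          Real.sqrt_lt_sqrt (htl c).le h1
      _ = deriv x c 0 := by rw [Real.sqrt_sq (hfut c).le]
  refine intervalIntegral.integral_lt_integral_of_continuousOn_of_le_of_exists_lt hlt
    ?_ ((hcdi 0).continuousOn) (fun t _ => hle t) ⟨c, hcIcc, hstrict⟩
  exact (Real.continuous_sqrt.comp (by continuity : Continuous
    (fun t => mink2 (deriv x t) (deriv x t)))).continuousOn
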